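/- For every k ∈ ℕ there is a constant C (depending quadratically on k) such that every simple ordered graph G on vertex set [n] (n ≥ 2) containing no ordered copy of any k-multiple of G_1 satisfies e(G) < (k² + k)n + k²·n·log₂ n. -/

import Mathlib

/-- The set of vertices of a hypergraph given as a list of finite edges. -/
def vset (H : List (Finset ℕ)) : Finset ℕ := H.foldr (· ∪ ·) ∅

/-- The number of vertices `v(H)`. -/
def nv (H : List (Finset ℕ)) : ℕ := (vset H).card

/-- The weight `i(H)`, the number of vertex-edge incidences. -/
def iw (H : List (Finset ℕ)) : ℕ := (H.map Finset.card).sum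

/-- A hypergraph is simple if its edges are distinct (and nonempty). -/
def HSimple (H : List (Finset ℕ)) : Prop := H.Nodup ∧ ∀ E ∈ H, E.Nonempty

/-- Ordered hypergraph containment: an increasing vertex injection together with an
injective assignment of edges such that each edge of `F` maps vertex-wise into its image. -/
def HContains (H F : List (Finset ℕ)) : Prop :=
  ∃ (φ : ℕ → ℕ) (f : Fin F.length → Fin H.length),
    StrictMono φ ∧ Function.Injective f ∧
      ∀ i : Fin F.length, ∀ v ∈ F.get i, φ v ∈ H.get (f i)

/-- `ex_e(F,n)`: max number of edges of a simple `F`-free hypergraph on at most `n` vertices. -/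
noncomputable def exE (F : List (Finset ℕ)) (n : ℕ) : ℕ :=
  sSup {m | ∃ H, HSimple H ∧ ¬ HContains H F ∧ nv H ≤ n ∧ H.length = m}

/-- `ex_i(F,n)`: max weight of a simple `F`-free hypergraph on at most `n` vertices. -/
noncomputable def exI (F : List (Finset ℕ)) (n : ℕ) : ℕ :=
  sSup {m | ∃ H, HSimple H ∧ ¬ HContains H F ∧ nv H ≤ n ∧ iw H = m}

/-- A hypergraph is a graph if all edges have two vertices. -/
def IsGraphH (H : List (Finset ℕ)) : Prop := ∀ E ∈ H, E.card = 2

/-- `gex(B,n)` for a family `B` of ordered graphs. -/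
noncomputable def gexSet (B : Set (List (Finset ℕ))) (n : ℕ) : ℕ :=
  sSup {m | ∃ G, HSimple G ∧ IsGraphH G ∧ (∀ F ∈ B, ¬ HContains G F) ∧ nv G ≤ n ∧ G.length = m}

/-- `gex(F,n)` for a single ordered graph. -/
noncomputable def gex (F : List (Finset ℕ)) (n : ℕ) : ℕ := gexSet {F} n

/-- `G'` is a `k`-blow-up of `G`: every edge colouring of `G'` using each colour at most `k`
times admits an ordered copy of `G` with pairwise distinct colours. -/
def IsBlowup (k : ℕ) (G' G : List (Finset ℕ)) : Prop :=
  ∀ χ : Fin G'.length → ℕ,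
    (∀ c : ℕ, (Finset.univ.filter fun i => χ i = c).card ≤ k) →
    ∃ (φ : ℕ → ℕ) (f : Fin G.length → Fin G'.length),
      StrictMono φ ∧ Function.Injective f ∧
      (∀ i : Fin G.length, ∀ v ∈ G.get i, φ v ∈ G'.get (f i)) ∧
      Function.Injective (χ ∘ f)

/-- The hierarchy `F_1(n) = 2n`, `F_{i+1}(n) = F_i iterated n times starting at 1`
(indexed from 0, so `Fiter i = F_{i+1}`). -/
def Fiter : ℕ → ℕ → ℕ
  | 0, n => 2 * n
  | i+1, n => (Fiter i)^[n] 1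

/-- The Ackermann function `A(n) = F_n(n)`. -/
def Ack (n : ℕ) : ℕ := Fiter (n - 1) n

/-- The inverse Ackermann function `α(n) = min {m : A(m) ≥ n}`. -/
noncomputable def invAck (n : ℕ) : ℕ := sInf {m | n ≤ Ack m}

/-- The almost constant factor `β(k,l,n)` from the generalized Davenport–Schinzel bound. -/
noncomputable def DSbeta (k l n : ℕ) : ℕ :=
  k * 2 ^ (k * l - 3) * (10 * k) ^ (2 * (invAck n) ^ (k * l - 4) + 8 * (invAck n) ^ (k * l - 5))

/-- The ordered graph `G_1 = ({1,3},{1,5},{2,3},{2,4})`. -/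
def G1 : List (Finset ℕ) := [{1,3}, {1,5}, {2,3}, {2,4}]

/-- A `k`-multiple of `G_1`. -/
def IsMultiple (k : ℕ) (G : List (Finset ℕ)) : Prop :=
  HSimple G ∧ IsGraphH G ∧
  ∃ (A B C : Finset ℕ) (v : ℕ),
    A.card = k ∧ (∀ a ∈ A, a < v) ∧ (∀ b ∈ B, v < b) ∧
    (∀ b ∈ B, ∀ c ∈ C, b < c) ∧
    vset G = A ∪ {v} ∪ B ∪ C ∧
    (∀ a ∈ A, ({a, v} : Finset ℕ) ∈ G) ∧
    (∀ a ∈ A, (B.filter fun b => ({a, b} : Finset ℕ) ∈ G).card = k) ∧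
    (∀ a ∈ A, (C.filter fun c => ({a, c} : Finset ℕ) ∈ G).card = k) ∧
    (∀ E ∈ G, (∃ a ∈ A, E = {a, v}) ∨ (∃ a ∈ A, ∃ w ∈ B ∪ C, E = {a, w}))

section AuxST10

open Finset

lemma mem_vset' {x : ℕ} {H : List (Finset ℕ)} : x ∈ vset H ↔ ∃ E ∈ H, x ∈ E := by
  induction H with
  | nil => simp [vset]
  | cons E t ih =>
    show x ∈ E ∪ vset t ↔ _
    simp only [Finset.mem_union, ih, List.mem_cons]
    constructor
    · rintro (h | ⟨E', hE', hx⟩)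
      · exact ⟨E, Or.inl rfl, h⟩
      · exact ⟨E', Or.inr hE', hx⟩
    · rintro ⟨E', (rfl | hE'), hx⟩
      · exact Or.inl hx
      · exact Or.inr ⟨E', hE', hx⟩

lemma pair_eq' {a w a' w' : ℕ} (h : a < w) (h' : a' < w')
    (he : ({a, w} : Finset ℕ) = ({a', w'} : Finset ℕ)) : a = a' ∧ w = w' := by
  have h1 : a ∈ ({a', w'} : Finset ℕ) := he ▸ (by simp)
  have h2 : w ∈ ({a', w'} : Finset ℕ) := he ▸ (by simp)
  have h3 : a' ∈ ({a, w} : Finset ℕ) := he ▸ (by simp)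
  have h4 : w' ∈ ({a, w} : Finset ℕ) := he ▸ (by simp)
  simp only [Finset.mem_insert, Finset.mem_singleton] at h1 h2 h3 h4
  omega

lemma pair_card' {a w : ℕ} (h : a < w) : ({a, w} : Finset ℕ).card = 2 :=
  Finset.card_pair (by omega)

/-- Right neighbourhoods. -/
def RN (n : ℕ) (G : List (Finset ℕ)) (a : ℕ) : Finset ℕ :=
  (Finset.Icc 1 n).filter (fun w => a < w ∧ ({a, w} : Finset ℕ) ∈ G)

lemma mem_RN {n a w : ℕ} {G : List (Finset ℕ)} :
    w ∈ RN n G a ↔ w ∈ Finset.Icc 1 n ∧ a < w ∧ ({a, w} : Finset ℕ) ∈ G := by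
  simp [RN]

end AuxST10
section AuxST10B
open Finset

lemma no_config {k n : ℕ} {G : List (Finset ℕ)} (hk : 1 ≤ k)
    (hfree : ∀ M : List (Finset ℕ), IsMultiple k M → ¬ HContains G M)
    (v T : ℕ) (S : Finset ℕ) (hScard : S.card = k)
    (hgood : ∀ a ∈ S, a < v ∧ ({a, v} : Finset ℕ) ∈ G ∧
      k ≤ ((RN n G a).filter (fun x => v < x ∧ x ≤ T)).card ∧
      k ≤ ((RN n G a).filter (fun x => T < x)).card) : False := by
  classical
  have hB : ∀ a ∈ S, ∃ t, t ⊆ (RN n G a).filter (fun x => v < x ∧ x ≤ T) ∧ t.card = k := by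
    intro a ha
    obtain ⟨t, ht1, ht2⟩ := Finset.exists_subset_card_eq (hgood a ha).2.2.1
    exact ⟨t, ht1, ht2⟩
  have hC : ∀ a ∈ S, ∃ t, t ⊆ (RN n G a).filter (fun x => T < x) ∧ t.card = k := by
    intro a ha
    obtain ⟨t, ht1, ht2⟩ := Finset.exists_subset_card_eq (hgood a ha).2.2.2
    exact ⟨t, ht1, ht2⟩
  choose! Ba hBa hBacard using hB
  choose! Ca hCa hCacard using hC
  have hav : ∀ a ∈ S, a < v := fun a ha => (hgood a ha).1
  have havG : ∀ a ∈ S, ({a, v} : Finset ℕ) ∈ G := fun a ha => (hgood a ha).2.1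
  have hbfact : ∀ a ∈ S, ∀ b ∈ Ba a, v < b ∧ b ≤ T ∧ ({a, b} : Finset ℕ) ∈ G := by
    intro a ha b hb
    have := hBa a ha hb
    rw [Finset.mem_filter, mem_RN] at this
    exact ⟨this.2.1, this.2.2, this.1.2.2⟩
  have hcfact : ∀ a ∈ S, ∀ c ∈ Ca a, T < c ∧ ({a, c} : Finset ℕ) ∈ G := by
    intro a ha c hc
    have := hCa a ha hc
    rw [Finset.mem_filter, mem_RN] at this
    exact ⟨this.2, this.1.2.2⟩
  have hSne : S.Nonempty := Finset.card_pos.mp (by omega)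
  obtain ⟨a₀, ha₀⟩ := hSne
  have hBane : ∀ a ∈ S, (Ba a).Nonempty := by
    intro a ha; apply Finset.card_pos.mp; rw [hBacard a ha]; omega
  have hCane : ∀ a ∈ S, (Ca a).Nonempty := by
    intro a ha; apply Finset.card_pos.mp; rw [hCacard a ha]; omega
  have hvT : v < T := by
    obtain ⟨b, hb⟩ := hBane a₀ ha₀
    have := hbfact a₀ ha₀ b hb
    omega
  set B := S.biUnion Ba with hBdef
  set C := S.biUnion Ca with hCdef
  have hBmem : ∀ b, b ∈ B ↔ ∃ a ∈ S, b ∈ Ba a := by intro b; simp [hBdef]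
  have hCmem : ∀ c, c ∈ C ↔ ∃ a ∈ S, c ∈ Ca a := by intro c; simp [hCdef]
  set M : List (Finset ℕ) :=
    S.toList.flatMap (fun a => ({a, v} : Finset ℕ) ::
      ((Ba a ∪ Ca a).toList.map (fun w => ({a, w} : Finset ℕ)))) with hMdef
  -- basic facts about the w's
  have hwfact : ∀ a ∈ S, ∀ w ∈ Ba a ∪ Ca a, v < w ∧ ({a, w} : Finset ℕ) ∈ G := by
    intro a ha w hw
    rcases Finset.mem_union.mp hw with h | h
    · exact ⟨(hbfact a ha w h).1, (hbfact a ha w h).2.2⟩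
    · exact ⟨lt_trans hvT (hcfact a ha w h).1, (hcfact a ha w h).2⟩
  -- membership characterization
  have hmem : ∀ E, E ∈ M ↔ ∃ a ∈ S, E = ({a, v} : Finset ℕ) ∨
      ∃ w ∈ Ba a ∪ Ca a, E = ({a, w} : Finset ℕ) := by
    intro E
    rw [hMdef]
    simp only [List.mem_flatMap, Finset.mem_toList, List.mem_cons, List.mem_map]
    constructor
    · rintro ⟨a, ha, (rfl | ⟨w, hw, rfl⟩)⟩
      · exact ⟨a, ha, Or.inl rfl⟩
      · exact ⟨a, ha, Or.inr ⟨w, hw, rfl⟩⟩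
    · rintro ⟨a, ha, (rfl | ⟨w, hw, rfl⟩)⟩
      · exact ⟨a, ha, Or.inl rfl⟩
      · exact ⟨a, ha, Or.inr ⟨w, hw, rfl⟩⟩
  -- shape of edges
  have hshape : ∀ E ∈ M, ∃ a w, a ∈ S ∧ a < v ∧ v ≤ w ∧ a < w ∧
      E = ({a, w} : Finset ℕ) ∧ ({a, w} : Finset ℕ) ∈ G ∧
      (w = v ∨ w ∈ Ba a ∪ Ca a) := by
    intro E hE
    rcases (hmem E).mp hE with ⟨a, ha, (rfl | ⟨w, hw, rfl⟩)⟩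
    · exact ⟨a, v, ha, hav a ha, le_refl v, hav a ha, rfl, havG a ha, Or.inl rfl⟩
    · obtain ⟨h1, h2⟩ := hwfact a ha w hw
      exact ⟨a, w, ha, hav a ha, le_of_lt h1, lt_trans (hav a ha) h1, rfl, h2, Or.inr hw⟩
  -- nodup
  have hnodup : M.Nodup := by
    rw [hMdef, List.nodup_flatMap]
    constructor
    · intro a ha
      rw [Finset.mem_toList] at ha
      rw [List.nodup_cons]
      constructor
      · -- {a,v} not in the mapped list
        simp only [List.mem_map, Finset.mem_toList]
        rintro ⟨w, hw, hww⟩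
        obtain ⟨h1, _⟩ := hwfact a ha w hw
        have := pair_eq' (hav a ha) (lt_trans (hav a ha) h1) hww.symm
        omega
      · apply List.Nodup.map_on
        · intro x hx y hy hxy
          rw [Finset.mem_toList] at hx hy
          have hx1 := (hwfact a ha x hx).1
          have hy1 := (hwfact a ha y hy).1
          exact (pair_eq' (lt_trans (hav a ha) hx1) (lt_trans (hav a ha) hy1) hxy).2
        · exact Finset.nodup_toList _
    · -- pairwise disjoint
      have : ∀ a ∈ S.toList, ∀ a' ∈ S.toList, a ≠ a' →
          (List.Disjoint (({a, v} : Finset ℕ) ::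
            ((Ba a ∪ Ca a).toList.map (fun w => ({a, w} : Finset ℕ))))
          (({a', v} : Finset ℕ) ::
            ((Ba a' ∪ Ca a').toList.map (fun w => ({a', w} : Finset ℕ))))) := by
        intro a ha a' ha' hne E hE hE'
        rw [Finset.mem_toList] at ha ha'
        have sh : ∃ w, v ≤ w ∧ a < w ∧ E = ({a, w} : Finset ℕ) := by
          rcases List.mem_cons.mp hE with rfl | hE2
          · exact ⟨v, le_refl v, hav a ha, rfl⟩
          · simp only [List.mem_map, Finset.mem_toList] at hE2
            obtain ⟨w, hw, rfl⟩ := hE2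
            have := (hwfact a ha w hw).1
            exact ⟨w, le_of_lt this, lt_trans (hav a ha) this, rfl⟩
        have sh' : ∃ w, v ≤ w ∧ a' < w ∧ E = ({a', w} : Finset ℕ) := by
          rcases List.mem_cons.mp hE' with rfl | hE2
          · exact ⟨v, le_refl v, hav a' ha', rfl⟩
          · simp only [List.mem_map, Finset.mem_toList] at hE2
            obtain ⟨w, hw, rfl⟩ := hE2
            have := (hwfact a' ha' w hw).1
            exact ⟨w, le_of_lt this, lt_trans (hav a' ha') this, rfl⟩
        obtain ⟨w, _, hw2, rfl⟩ := sh
        obtain ⟨w', _, hw2', hEE⟩ := sh'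
        exact hne (pair_eq' hw2 hw2' hEE).1
      exact (Finset.nodup_toList S).pairwise_of_forall_ne this

  -- simple
  have hsimple : HSimple M := by
    refine ⟨hnodup, ?_⟩
    intro E hE
    obtain ⟨a, w, _, _, _, _, rfl, _, _⟩ := hshape E hE
    exact ⟨a, by simp⟩
  have hgraph : IsGraphH M := by
    intro E hE
    obtain ⟨a, w, _, _, _, haw, rfl, _, _⟩ := hshape E hE
    exact pair_card' haw
  have hmem1 : ∀ a ∈ S, ({a, v} : Finset ℕ) ∈ M := fun a ha => (hmem _).mpr ⟨a, ha, Or.inl rfl⟩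
  have hmem2 : ∀ a ∈ S, ∀ w ∈ Ba a ∪ Ca a, ({a, w} : Finset ℕ) ∈ M :=
    fun a ha w hw => (hmem _).mpr ⟨a, ha, Or.inr ⟨w, hw, rfl⟩⟩
  -- vset
  have hvset : vset M = S ∪ {v} ∪ B ∪ C := by
    ext x
    simp only [Finset.mem_union, Finset.mem_singleton]
    rw [mem_vset']
    constructor
    · rintro ⟨E, hE, hx⟩
      obtain ⟨a, w, ha, _, _, _, rfl, _, hwv⟩ := hshape E hE
      simp only [Finset.mem_insert, Finset.mem_singleton] at hx
      rcases hx with rfl | rfl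
      · exact Or.inl (Or.inl (Or.inl ha))
      · rcases hwv with rfl | hw
        · exact Or.inl (Or.inl (Or.inr rfl))
        · rcases Finset.mem_union.mp hw with h | h
          · exact Or.inl (Or.inr ((hBmem x).mpr ⟨a, ha, h⟩))
          · exact Or.inr ((hCmem x).mpr ⟨a, ha, h⟩)
    · rintro (((hx | rfl) | hx) | hx)
      · exact ⟨{x, v}, hmem1 x hx, by simp⟩
      · exact ⟨{a₀, x}, hmem1 a₀ ha₀, by simp⟩
      · obtain ⟨a, ha, hxa⟩ := (hBmem x).mp hx
        exact ⟨{a, x}, hmem2 a ha x (Finset.mem_union_left _ hxa), by simp⟩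
      · obtain ⟨a, ha, hxa⟩ := (hCmem x).mp hx
        exact ⟨{a, x}, hmem2 a ha x (Finset.mem_union_right _ hxa), by simp⟩
  have hBfilter : ∀ a ∈ S, B.filter (fun b => ({a, b} : Finset ℕ) ∈ M) = Ba a := by
    intro a ha
    ext b
    rw [Finset.mem_filter]
    constructor
    · rintro ⟨hbB, hbM⟩
      obtain ⟨a', hba'⟩ := (hBmem b).mp hbB
      have hvb : v < b := (hbfact a' hba'.1 b hba'.2).1
      rcases (hmem _).mp hbM with ⟨a'', ha'', heq | ⟨w, hw, heq⟩⟩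
      · obtain ⟨_, h2⟩ := pair_eq' (lt_trans (hav a ha) hvb) (hav a'' ha'') heq
        omega
      · have hw1 := (hwfact a'' ha'' w hw).1
        obtain ⟨rfl, rfl⟩ := pair_eq' (lt_trans (hav a ha) hvb) (lt_trans (hav a'' ha'') hw1) heq
        rcases Finset.mem_union.mp hw with h | h
        · exact h
        · have h1 := (hcfact a ha _ h).1
          have h2 := (hbfact a' hba'.1 b hba'.2).2.1
          omega
    · intro hb
      exact ⟨(hBmem b).mpr ⟨a, ha, hb⟩, hmem2 a ha b (Finset.mem_union_left _ hb)⟩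
  have hCfilter : ∀ a ∈ S, C.filter (fun c => ({a, c} : Finset ℕ) ∈ M) = Ca a := by
    intro a ha
    ext c
    rw [Finset.mem_filter]
    constructor
    · rintro ⟨hcC, hcM⟩
      obtain ⟨a', hca'⟩ := (hCmem c).mp hcC
      have hTc : T < c := (hcfact a' hca'.1 c hca'.2).1
      have hvc : v < c := lt_trans hvT hTc
      rcases (hmem _).mp hcM with ⟨a'', ha'', heq | ⟨w, hw, heq⟩⟩
      · obtain ⟨_, h2⟩ := pair_eq' (lt_trans (hav a ha) hvc) (hav a'' ha'') heq
        omega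
      · have hw1 := (hwfact a'' ha'' w hw).1
        obtain ⟨rfl, rfl⟩ := pair_eq' (lt_trans (hav a ha) hvc) (lt_trans (hav a'' ha'') hw1) heq
        rcases Finset.mem_union.mp hw with h | h
        · have := (hbfact a ha _ h).2.1; omega
        · exact h
    · intro hc
      exact ⟨(hCmem c).mpr ⟨a, ha, hc⟩, hmem2 a ha c (Finset.mem_union_right _ hc)⟩
  have hmult : IsMultiple k M := by
    refine ⟨hsimple, hgraph, S, B, C, v, hScard, hav, ?_, ?_, hvset, hmem1, ?_, ?_, ?_⟩
    · intro b hb; obtain ⟨a, ha, h⟩ := (hBmem b).mp hb; exact (hbfact a ha b h).1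
    · intro b hb c hc
      obtain ⟨a, ha, h⟩ := (hBmem b).mp hb
      obtain ⟨a', ha', h'⟩ := (hCmem c).mp hc
      have h1 := (hbfact a ha b h).2.1
      have h2 := (hcfact a' ha' c h').1
      omega
    · intro a ha; rw [hBfilter a ha]; exact hBacard a ha
    · intro a ha; rw [hCfilter a ha]; exact hCacard a ha
    · intro E hE
      rcases (hmem E).mp hE with ⟨a, ha, (rfl | ⟨w, hw, rfl⟩)⟩
      · exact Or.inl ⟨a, ha, rfl⟩
      · refine Or.inr ⟨a, ha, w, ?_, rfl⟩
        rcases Finset.mem_union.mp hw with h | h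
        · exact Finset.mem_union_left _ ((hBmem w).mpr ⟨a, ha, h⟩)
        · exact Finset.mem_union_right _ ((hCmem w).mpr ⟨a, ha, h⟩)
  have hMsubG : ∀ E ∈ M, E ∈ G := by
    intro E hE
    obtain ⟨a, w, _, _, _, _, rfl, hG, _⟩ := hshape E hE
    exact hG
  apply hfree M hmult
  have hlt : ∀ i : Fin M.length, G.idxOf (M.get i) < G.length :=
    fun i => List.idxOf_lt_length_iff.mpr (hMsubG _ (by simpa using M.get_mem i.1 i.2))
  have hgi : ∀ i : Fin M.length, G.get ⟨G.idxOf (M.get i), hlt i⟩ = M.get i := by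
    intro i
    simp [List.get_eq_getElem, List.getElem_idxOf]
  refine ⟨id, fun i => ⟨G.idxOf (M.get i), hlt i⟩, strictMono_id, ?_, ?_⟩
  · intro i j hij
    have : M.get i = M.get j := by
      have h3 := congrArg (fun x : Fin G.length => G.get x) hij
      simpa [hgi i, hgi j] using h3
    exact (List.nodup_iff_injective_get.mp hnodup) this
  · intro i x hx
    rw [hgi i]; exact hx

end AuxST10B
section AuxST10C
open Finset

/-- Neighbours after `v`. -/
def aft (n : ℕ) (G : List (Finset ℕ)) (a v : ℕ) : Finset ℕ :=
  (RN n G a).filter (fun x => v < x)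

/-- Early right-neighbours of `a`. -/
def earlyS (k n : ℕ) (G : List (Finset ℕ)) (a : ℕ) : Finset ℕ :=
  (RN n G a).filter (fun v => 2 * k ≤ (aft n G a v).card)

def Dset (k n : ℕ) (G : List (Finset ℕ)) (a v : ℕ) : Finset ℕ :=
  (aft n G a v).filter (fun t => k ≤ ((aft n G a v).filter (fun x => x ≤ t)).card)

noncomputable def mvv (k n : ℕ) (G : List (Finset ℕ)) (a v : ℕ) : ℕ :=
  sInf {t : ℕ | t ∈ Dset k n G a v}

def Eset (k n : ℕ) (G : List (Finset ℕ)) (a : ℕ) : Finset ℕ :=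
  (RN n G a).filter (fun t => k ≤ ((RN n G a).filter (fun x => t ≤ x)).card)

noncomputable def Mxx (k n : ℕ) (G : List (Finset ℕ)) (a : ℕ) : ℕ :=
  sSup {t : ℕ | t ∈ Eset k n G a}

noncomputable def wq (k n : ℕ) (G : List (Finset ℕ)) (a v : ℕ) : ℕ :=
  Mxx k n G a - v - 1

noncomputable def case1p (k n : ℕ) (G : List (Finset ℕ)) (a v : ℕ) : Prop :=
  mvv k n G a v - v ≤ 2 ^ (Nat.log 2 (wq k n G a v))

noncomputable instance case1pDec (k n : ℕ) (G : List (Finset ℕ)) (a v : ℕ) :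
    Decidable (case1p k n G a v) := by unfold case1p; exact inferInstance

variable {k n : ℕ} {G : List (Finset ℕ)}

section OrderLemmas
variable {a v : ℕ} (hk : 1 ≤ k) (ha : 2 * k ≤ (aft n G a v).card)

include hk ha

lemma Dset_ne : (Dset k n G a v).Nonempty := by
  have hne : (aft n G a v).Nonempty := Finset.card_pos.mp (by omega)
  refine ⟨(aft n G a v).max' hne, ?_⟩
  rw [Dset, Finset.mem_filter]
  refine ⟨(aft n G a v).max'_mem hne, ?_⟩
  have : (aft n G a v).filter (fun x => x ≤ (aft n G a v).max' hne) = aft n G a v := by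
    apply Finset.filter_true_of_mem
    intro x hx; exact Finset.le_max' _ x hx
  rw [this]; omega

lemma mvv_mem : mvv k n G a v ∈ Dset k n G a v := by
  have := Dset_ne hk ha
  exact Nat.sInf_mem (by obtain ⟨t, ht⟩ := this; exact ⟨t, ht⟩)

lemma mvv_min : ∀ t ∈ Dset k n G a v, mvv k n G a v ≤ t := fun t ht => Nat.sInf_le ht

lemma mvv_in_aft : mvv k n G a v ∈ aft n G a v :=
  (Finset.mem_filter.mp (mvv_mem hk ha)).1

lemma mvv_count : k ≤ ((aft n G a v).filter (fun x => x ≤ mvv k n G a v)).card :=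
  (Finset.mem_filter.mp (mvv_mem hk ha)).2

lemma mvv_exact : ((aft n G a v).filter (fun x => x ≤ mvv k n G a v)).card ≤ k := by
  by_contra hgt
  push_neg at hgt
  set m := mvv k n G a v with hm
  set F := (aft n G a v).filter (fun x => x ≤ m) with hF
  have hmF : m ∈ F := Finset.mem_filter.mpr ⟨mvv_in_aft hk ha, le_refl m⟩
  have hcard : k ≤ (F.erase m).card := by
    rw [Finset.card_erase_of_mem hmF]; omega
  have hne : (F.erase m).Nonempty := Finset.card_pos.mp (by omega)
  set t₁ := (F.erase m).max' hne with ht₁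
  have ht₁mem : t₁ ∈ F.erase m := Finset.max'_mem _ hne
  have ht₁F : t₁ ∈ F := Finset.mem_of_mem_erase ht₁mem
  have ht₁lt : t₁ < m := lt_of_le_of_ne (Finset.mem_filter.mp ht₁F).2
    (Finset.ne_of_mem_erase ht₁mem)
  have hsub : F.erase m ⊆ (aft n G a v).filter (fun x => x ≤ t₁) := by
    intro x hx
    refine Finset.mem_filter.mpr ⟨(Finset.mem_filter.mp (Finset.mem_of_mem_erase hx)).1, ?_⟩
    exact Finset.le_max' _ x hx
  have : t₁ ∈ Dset k n G a v := by
    rw [Dset, Finset.mem_filter]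
    exact ⟨(Finset.mem_filter.mp ht₁F).1, le_trans hcard (Finset.card_le_card hsub)⟩
  have := mvv_min hk ha t₁ this
  omega

lemma Eset_ne : (Eset k n G a).Nonempty := by
  have hsub : aft n G a v ⊆ RN n G a := Finset.filter_subset _ _
  have hRN : 2 * k ≤ (RN n G a).card := le_trans ha (Finset.card_le_card hsub)
  have hne : (RN n G a).Nonempty := Finset.card_pos.mp (by omega)
  refine ⟨(RN n G a).min' hne, ?_⟩
  rw [Eset, Finset.mem_filter]
  refine ⟨(RN n G a).min'_mem hne, ?_⟩
  have : (RN n G a).filter (fun x => (RN n G a).min' hne ≤ x) = RN n G a := by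
    apply Finset.filter_true_of_mem
    intro x hx; exact Finset.min'_le _ x hx
  rw [this]; omega

lemma Mxx_mem : Mxx k n G a ∈ Eset k n G a := by
  apply Nat.sSup_mem
  · obtain ⟨t, ht⟩ := Eset_ne hk ha; exact ⟨t, ht⟩
  · exact (Eset k n G a).bddAbove

lemma Mxx_max : ∀ t ∈ Eset k n G a, t ≤ Mxx k n G a :=
  fun t ht => le_csSup (Eset k n G a).bddAbove ht

lemma Mxx_in_RN : Mxx k n G a ∈ RN n G a :=
  (Finset.mem_filter.mp (Mxx_mem hk ha)).1

lemma Mxx_count : k ≤ ((RN n G a).filter (fun x => Mxx k n G a ≤ x)).card :=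
  (Finset.mem_filter.mp (Mxx_mem hk ha)).2

lemma Mxx_exact : ((RN n G a).filter (fun x => Mxx k n G a ≤ x)).card ≤ k := by
  by_contra hgt
  push_neg at hgt
  set X := Mxx k n G a with hX
  set F := (RN n G a).filter (fun x => X ≤ x) with hF
  have hXF : X ∈ F := Finset.mem_filter.mpr ⟨Mxx_in_RN hk ha, le_refl X⟩
  have hcard : k ≤ (F.erase X).card := by
    rw [Finset.card_erase_of_mem hXF]; omega
  have hne : (F.erase X).Nonempty := Finset.card_pos.mp (by omega)
  set t₁ := (F.erase X).min' hne with ht₁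
  have ht₁mem : t₁ ∈ F.erase X := Finset.min'_mem _ hne
  have ht₁F : t₁ ∈ F := Finset.mem_of_mem_erase ht₁mem
  have ht₁gt : X < t₁ := lt_of_le_of_ne (Finset.mem_filter.mp ht₁F).2
    (Ne.symm (Finset.ne_of_mem_erase ht₁mem))
  have hsub : F.erase X ⊆ (RN n G a).filter (fun x => t₁ ≤ x) := by
    intro x hx
    refine Finset.mem_filter.mpr ⟨(Finset.mem_filter.mp (Finset.mem_of_mem_erase hx)).1, ?_⟩
    exact Finset.min'_le _ x hx
  have : t₁ ∈ Eset k n G a := by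
    rw [Eset, Finset.mem_filter]
    exact ⟨(Finset.mem_filter.mp ht₁F).1, le_trans hcard (Finset.card_le_card hsub)⟩
  have := Mxx_max hk ha t₁ this
  omega

lemma mvv_lt_Mxx : mvv k n G a v < Mxx k n G a := by
  have hsplit := Finset.card_filter_add_card_filter_not
    (s := aft n G a v) (p := fun x => x ≤ mvv k n G a v)
  have hex := mvv_exact hk ha
  have h1 : k ≤ ((aft n G a v).filter (fun x => ¬ x ≤ mvv k n G a v)).card := by omega
  have hsub : insert (mvv k n G a v) ((aft n G a v).filter (fun x => ¬ x ≤ mvv k n G a v)) ⊆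
      (RN n G a).filter (fun x => mvv k n G a v ≤ x) := by
    intro x hx
    rcases Finset.mem_insert.mp hx with rfl | hx
    · exact Finset.mem_filter.mpr ⟨(Finset.mem_filter.mp (mvv_in_aft hk ha)).1, le_refl _⟩
    · have := Finset.mem_filter.mp hx
      exact Finset.mem_filter.mpr ⟨(Finset.mem_filter.mp this.1).1, by omega⟩
  have hcard2 : k + 1 ≤ ((RN n G a).filter (fun x => mvv k n G a v ≤ x)).card := by
    have hnotmem : mvv k n G a v ∉ (aft n G a v).filter (fun x => ¬ x ≤ mvv k n G a v) := by
      simp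
    have := Finset.card_insert_of_notMem hnotmem
    have hle := Finset.card_le_card hsub
    omega
  have hmE : mvv k n G a v ∈ Eset k n G a := by
    rw [Eset, Finset.mem_filter]
    exact ⟨(Finset.mem_filter.mp (mvv_in_aft hk ha)).1, by omega⟩
  have hle : mvv k n G a v ≤ Mxx k n G a := Mxx_max hk ha (mvv k n G a v) hmE
  rcases lt_or_eq_of_le hle with h | h
  · exact h
  · exfalso
    have := Mxx_exact hk ha
    rw [← h] at this
    omega

lemma wq_ge : k ≤ wq k n G a v := by
  have hsplit := Finset.card_filter_add_card_filter_not
    (s := aft n G a v) (p := fun x => Mxx k n G a ≤ x)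
  have hsub : (aft n G a v).filter (fun x => Mxx k n G a ≤ x) ⊆
      (RN n G a).filter (fun x => Mxx k n G a ≤ x) := by
    intro x hx
    have := Finset.mem_filter.mp hx
    exact Finset.mem_filter.mpr ⟨(Finset.mem_filter.mp this.1).1, this.2⟩
  have h1 : ((aft n G a v).filter (fun x => Mxx k n G a ≤ x)).card ≤ k :=
    le_trans (Finset.card_le_card hsub) (Mxx_exact hk ha)
  have h2 : k ≤ ((aft n G a v).filter (fun x => ¬ Mxx k n G a ≤ x)).card := by omega
  have hsub2 : (aft n G a v).filter (fun x => ¬ Mxx k n G a ≤ x) ⊆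
      Finset.Ioo v (Mxx k n G a) := by
    intro x hx
    have h3 := Finset.mem_filter.mp hx
    have h4 := Finset.mem_filter.mp h3.1
    exact Finset.mem_Ioo.mpr ⟨h4.2, by omega⟩
  have := Finset.card_le_card hsub2
  rw [Nat.card_Ioo] at this
  rw [wq]
  omega

lemma v_lt_mvv : v < mvv k n G a v := (Finset.mem_filter.mp (mvv_in_aft hk ha)).2

/-- Goodness of `a` at `(v, T)` whenever `mvv ≤ T < Mxx`. -/
lemma good_at {T : ℕ} (hT1 : mvv k n G a v ≤ T) (hT2 : T < Mxx k n G a) :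
    k ≤ ((RN n G a).filter (fun x => v < x ∧ x ≤ T)).card ∧
    k ≤ ((RN n G a).filter (fun x => T < x)).card := by
  constructor
  · have hsub : (aft n G a v).filter (fun x => x ≤ mvv k n G a v) ⊆
        (RN n G a).filter (fun x => v < x ∧ x ≤ T) := by
      intro x hx
      have h1 := Finset.mem_filter.mp hx
      have h2 := Finset.mem_filter.mp h1.1
      exact Finset.mem_filter.mpr ⟨h2.1, h2.2, le_trans h1.2 hT1⟩
    exact le_trans (mvv_count hk ha) (Finset.card_le_card hsub)
  · have hsub : (RN n G a).filter (fun x => Mxx k n G a ≤ x) ⊆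
        (RN n G a).filter (fun x => T < x) := by
      intro x hx
      have h1 := Finset.mem_filter.mp hx
      exact Finset.mem_filter.mpr ⟨h1.1, by omega⟩
    exact le_trans (Mxx_count hk ha) (Finset.card_le_card hsub)

end OrderLemmas

end AuxST10C
section AuxST10D
open Finset

variable {k n : ℕ} {G : List (Finset ℕ)}

lemma length_eq_sum (hS : HSimple G) (hGr : IsGraphH G) (hv : vset G ⊆ Finset.Icc 1 n) :
    G.length = ∑ a ∈ Finset.Icc 1 n, (RN n G a).card := by
  classical
  have h1 : G.length = G.toFinset.card := (List.toFinset_card_of_nodup hS.1).symm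
  have h2 : G.toFinset = (Finset.Icc 1 n).biUnion
      (fun a => (RN n G a).image (fun w => ({a, w} : Finset ℕ))) := by
    ext E
    rw [List.mem_toFinset, Finset.mem_biUnion]
    constructor
    · intro hE
      obtain ⟨x, y, hxy, rfl⟩ := Finset.card_eq_two.mp (hGr _ hE)
      have hx : x ∈ Finset.Icc 1 n := hv (mem_vset'.mpr ⟨_, hE, by simp⟩)
      have hy : y ∈ Finset.Icc 1 n := hv (mem_vset'.mpr ⟨_, hE, by simp⟩)
      rcases lt_or_gt_of_ne hxy with h | h
      · exact ⟨x, hx, Finset.mem_image.mpr ⟨y, mem_RN.mpr ⟨hy, h, hE⟩, rfl⟩⟩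
      · refine ⟨y, hy, Finset.mem_image.mpr ⟨x, mem_RN.mpr ⟨hx, h, ?_⟩, ?_⟩⟩
        · rwa [Finset.pair_comm]
        · rw [Finset.pair_comm]
    · rintro ⟨a, _, hE⟩
      obtain ⟨w, hw, rfl⟩ := Finset.mem_image.mp hE
      exact (mem_RN.mp hw).2.2
  rw [h1, h2, Finset.card_biUnion]
  · apply Finset.sum_congr rfl
    intro a _
    apply Finset.card_image_of_injOn
    intro x hx y hy hxy
    exact (pair_eq' (mem_RN.mp hx).2.1 (mem_RN.mp hy).2.1 hxy).2
  · intro a _ a' _ hne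
    simp only [Function.onFun]
    rw [Finset.disjoint_left]
    intro E hE hE'
    obtain ⟨w, hw, rfl⟩ := Finset.mem_image.mp hE
    obtain ⟨w', hw', heq⟩ := Finset.mem_image.mp hE'
    exact hne ((pair_eq' (mem_RN.mp hw).2.1 (mem_RN.mp hw').2.1 heq.symm).1)

lemma late_bound (a : ℕ) :
    ((RN n G a).filter (fun v => ¬ 2 * k ≤ (aft n G a v).card)).card ≤ 2 * k := by
  classical
  have key : ∀ x ∈ RN n G a, ∀ y ∈ RN n G a, x < y →
      (aft n G a y).card < (aft n G a x).card := by
    intro x hx y hy hxy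
    apply Finset.card_lt_card
    constructor
    · intro z hz
      have := Finset.mem_filter.mp hz
      exact Finset.mem_filter.mpr ⟨this.1, by omega⟩
    · intro hsub
      have hyx : y ∈ aft n G a x := Finset.mem_filter.mpr ⟨hy, hxy⟩
      have := hsub hyx
      have := (Finset.mem_filter.mp this).2
      omega
  have : ((RN n G a).filter (fun v => ¬ 2 * k ≤ (aft n G a v).card)).card ≤
      (Finset.range (2 * k)).card := by
    apply Finset.card_le_card_of_injOn (fun v => (aft n G a v).card)
    · intro v hvm
      have := Finset.mem_filter.mp hvm
      simp only [Finset.coe_range, Set.mem_Iio]; omega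
    · intro x hx y hy heq
      have heq' : (aft n G a x).card = (aft n G a y).card := by simpa using heq
      simp only [Finset.coe_filter, Set.mem_setOf_eq] at hx hy
      by_contra hne
      rcases lt_or_gt_of_ne hne with h | h
      · have := key x hx.1 y hy.1 h; omega
      · have := key y hy.1 x hx.1 h; omega -- heq'
  simpa using this

/-- For `k = 1` there are no early pairs at all. -/
lemma early_empty (hk1 : k = 1)
    (hfree : ∀ M : List (Finset ℕ), IsMultiple k M → ¬ HContains G M) (a : ℕ) :
    earlyS k n G a = ∅ := by
  classical
  rw [Finset.eq_empty_iff_forall_notMem]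
  intro v hvmem
  rw [earlyS, Finset.mem_filter] at hvmem
  obtain ⟨hvRN, ha⟩ := hvmem
  have hk : 1 ≤ k := by omega
  have hgood := good_at hk ha (le_refl (mvv k n G a v)) (mvv_lt_Mxx hk ha)
  apply no_config (n := n) hk hfree v (mvv k n G a v) {a} (by simp [hk1])
  intro a' ha'
  rw [Finset.mem_singleton] at ha'
  subst ha'
  have h1 := mem_RN.mp hvRN
  exact ⟨h1.2.1, h1.2.2, hgood.1, hgood.2⟩

end AuxST10D
section AuxST10E
open Finset

variable {k n : ℕ} {G : List (Finset ℕ)}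

lemma case1_bound (hk : 1 ≤ k)
    (hfree : ∀ M : List (Finset ℕ), IsMultiple k M → ¬ HContains G M) :
    (((Finset.Icc 1 n).sigma (fun a => earlyS k n G a)).filter
      (fun x => case1p k n G x.1 x.2)).card ≤ (k - 1) * (n * (Nat.log 2 n + 1)) := by
  classical
  set s := ((Finset.Icc 1 n).sigma (fun a => earlyS k n G a)).filter
      (fun x => case1p k n G x.1 x.2) with hs
  set f : (Σ _ : ℕ, ℕ) → ℕ × ℕ := fun x => (x.2, Nat.log 2 (wq k n G x.1 x.2)) with hf
  have hselt : ∀ x ∈ s, x.2 ∈ RN n G x.1 ∧ 2 * k ≤ (aft n G x.1 x.2).card ∧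
      case1p k n G x.1 x.2 := by
    intro x hx
    rw [hs, Finset.mem_filter, Finset.mem_sigma] at hx
    have h2 := hx.1.2
    rw [earlyS, Finset.mem_filter] at h2
    exact ⟨h2.1, h2.2, hx.2⟩
  have hfib : ∀ p ∈ s.image f, (s.filter (fun x => f x = p)).card ≤ k - 1 := by
    intro p _
    by_contra hgt
    push_neg at hgt
    have hgt' : k ≤ (s.filter (fun x => f x = p)).card := by omega
    set F := s.filter (fun x => f x = p) with hF
    have himg : k ≤ (F.image (fun x => x.1)).card := by
      rw [Finset.card_image_of_injOn]
      · exact hgt'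
      · intro x hx y hy hxy
        have hx2 : x.2 = p.1 := congrArg Prod.fst ((Finset.mem_filter.mp hx).2)
        have hy2 : y.2 = p.1 := congrArg Prod.fst ((Finset.mem_filter.mp hy).2)
        exact Sigma.ext hxy (heq_of_eq (hx2.trans hy2.symm))
    obtain ⟨SS, hSS, hSScard⟩ := Finset.exists_subset_card_eq himg
    apply no_config (n := n) hk hfree p.1 (p.1 + 2 ^ p.2) SS hSScard
    intro a haSS
    obtain ⟨x, hxF, hx1⟩ := Finset.mem_image.mp (hSS haSS)
    have hxs := (Finset.mem_filter.mp hxF).1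
    have hxp := (Finset.mem_filter.mp hxF).2
    obtain ⟨hRN, ha2, hc1⟩ := hselt x hxs
    have hv : x.2 = p.1 := congrArg Prod.fst hxp
    have hl : Nat.log 2 (wq k n G x.1 x.2) = p.2 := by rw [← hxp]
    have hwge := wq_ge hk ha2
    have hmlt := mvv_lt_Mxx hk ha2
    have hvm := v_lt_mvv hk ha2
    have hT1 : mvv k n G x.1 x.2 ≤ x.2 + 2 ^ (Nat.log 2 (wq k n G x.1 x.2)) := by
      rw [case1p] at hc1; omega
    have hT2 : x.2 + 2 ^ (Nat.log 2 (wq k n G x.1 x.2)) < Mxx k n G x.1 := by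
      have hple := Nat.pow_log_le_self 2 (x := wq k n G x.1 x.2) (by omega)
      have e1 : wq k n G x.1 x.2 = Mxx k n G x.1 - x.2 - 1 := rfl
      omega
    have hgood := good_at hk ha2 hT1 hT2
    subst hx1
    rw [← hl, ← hv]
    exact ⟨(mem_RN.mp hRN).2.1, (mem_RN.mp hRN).2.2, hgood.1, hgood.2⟩
  have himgsub : s.image f ⊆ (Finset.Icc 1 n) ×ˢ (Finset.range (Nat.log 2 n + 1)) := by
    intro p hp
    obtain ⟨x, hx, rfl⟩ := Finset.mem_image.mp hp
    obtain ⟨hRN, ha2, _⟩ := hselt x hx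
    refine Finset.mem_product.mpr ⟨(mem_RN.mp hRN).1, ?_⟩
    rw [Finset.mem_range]
    have hMx := Mxx_in_RN hk ha2
    have h1 : Mxx k n G x.1 ≤ n := (Finset.mem_Icc.mp (mem_RN.mp hMx).1).2
    have h2 : wq k n G x.1 x.2 ≤ n := by
      have e1 : wq k n G x.1 x.2 = Mxx k n G x.1 - x.2 - 1 := rfl
      omega
    have hml := Nat.log_mono_right (b := 2) h2
    have hfx : (f x).2 = Nat.log 2 (wq k n G x.1 x.2) := rfl
    omega
  calc s.card = ∑ p ∈ s.image f, (s.filter (fun x => f x = p)).card :=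
        Finset.card_eq_sum_card_image f s
    _ ≤ ∑ _p ∈ s.image f, (k - 1) := Finset.sum_le_sum hfib
    _ = (s.image f).card * (k - 1) := by rw [Finset.sum_const, smul_eq_mul]
    _ ≤ (n * (Nat.log 2 n + 1)) * (k - 1) := by
        apply Nat.mul_le_mul_right
        have hcc := Finset.card_le_card himgsub
        rw [Finset.card_product, Nat.card_Icc, Finset.card_range] at hcc
        simpa using hcc
    _ = (k - 1) * (n * (Nat.log 2 n + 1)) := Nat.mul_comm _ _

lemma case2_bound (hk2 : 2 ≤ k) (a : ℕ) :
    ((earlyS k n G a).filter (fun v => ¬ case1p k n G a v)).card ≤ k * Nat.log 2 n := by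
  classical
  have hk : 1 ≤ k := by omega
  set s := (earlyS k n G a).filter (fun v => ¬ case1p k n G a v) with hs
  have hselt : ∀ v ∈ s, v ∈ RN n G a ∧ 2 * k ≤ (aft n G a v).card ∧ ¬ case1p k n G a v := by
    intro v hvm
    rw [hs, Finset.mem_filter] at hvm
    have h2 := hvm.1
    rw [earlyS, Finset.mem_filter] at h2
    exact ⟨h2.1, h2.2, hvm.2⟩
  set f : ℕ → ℕ := fun v => Nat.log 2 (wq k n G a v) with hf
  have hfib : ∀ p ∈ s.image f, (s.filter (fun x => f x = p)).card ≤ k := by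
    intro p _
    by_contra hgt
    push_neg at hgt
    set F := s.filter (fun x => f x = p) with hF
    have hFs : F ⊆ s := Finset.filter_subset _ _
    have hne : F.Nonempty := Finset.card_pos.mp (by omega)
    have hvv' : F.min' hne < F.max' hne := Finset.min'_lt_max'_of_card F (by omega)
    set v := F.min' hne with hvdef
    set v' := F.max' hne with hv'def
    have hvF : v ∈ F := F.min'_mem hne
    have hv'F : v' ∈ F := F.max'_mem hne
    obtain ⟨hvRN, hva, hvc⟩ := hselt v (hFs hvF)
    obtain ⟨hv'RN, hv'a, _⟩ := hselt v' (hFs hv'F)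
    have hv'aft : v' ∈ aft n G a v := Finset.mem_filter.mpr ⟨hv'RN, hvv'⟩
    have hsub : F.erase v ⊆ (aft n G a v).filter (fun x => x ≤ v') := by
      intro x hx
      have hxF := Finset.mem_of_mem_erase hx
      have hxRN := (hselt x (hFs hxF)).1
      have hxv : v < x := lt_of_le_of_ne (F.min'_le x hxF) (Ne.symm (Finset.ne_of_mem_erase hx))
      exact Finset.mem_filter.mpr ⟨Finset.mem_filter.mpr ⟨hxRN, hxv⟩, F.le_max' x hxF⟩
    have hcard : k ≤ (F.erase v).card := by
      rw [Finset.card_erase_of_mem hvF]; omega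
    have hv'D : v' ∈ Dset k n G a v :=
      Finset.mem_filter.mpr ⟨hv'aft, le_trans hcard (Finset.card_le_card hsub)⟩
    have hmle : mvv k n G a v ≤ v' := mvv_min hk hva v' hv'D
    have hvm := v_lt_mvv hk hva
    have hmlt := mvv_lt_Mxx hk hva
    have hwv' := wq_ge hk hv'a
    have hq1 : wq k n G a v < 2 ^ (Nat.log 2 (wq k n G a v) + 1) := by
      have := Nat.lt_pow_succ_log_self (b := 2) (by norm_num) (wq k n G a v)
      simpa using this
    have hnotc : 2 ^ (Nat.log 2 (wq k n G a v)) < mvv k n G a v - v := by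
      rw [case1p] at hvc; omega
    have hhalf : 2 * wq k n G a v' ≤ wq k n G a v := by
      have e1 : wq k n G a v = Mxx k n G a - v - 1 := rfl
      have e2 : wq k n G a v' = Mxx k n G a - v' - 1 := rfl
      have h2l : 2 ^ (Nat.log 2 (wq k n G a v) + 1) = 2 * 2 ^ (Nat.log 2 (wq k n G a v)) := by
        ring
      omega
    have hlog : Nat.log 2 (wq k n G a v') + 1 ≤ Nat.log 2 (wq k n G a v) := by
      have h1 : Nat.log 2 (wq k n G a v' * 2) = Nat.log 2 (wq k n G a v') + 1 :=
        Nat.log_mul_base (by norm_num) (by omega)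
      have h2 : Nat.log 2 (wq k n G a v' * 2) ≤ Nat.log 2 (wq k n G a v) :=
        Nat.log_mono_right (by omega)
      omega
    have hpv : f v = p := (Finset.mem_filter.mp hvF).2
    have hpv' : f v' = p := (Finset.mem_filter.mp hv'F).2
    rw [hf] at hpv hpv'
    simp only at hpv hpv'
    omega
  have himgsub : s.image f ⊆ Finset.Icc 1 (Nat.log 2 n) := by
    intro p hp
    obtain ⟨x, hx, rfl⟩ := Finset.mem_image.mp hp
    obtain ⟨hRN, ha2, _⟩ := hselt x hx
    have hwge := wq_ge hk ha2
    have hMx := Mxx_in_RN hk ha2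
    have h1 : Mxx k n G a ≤ n := (Finset.mem_Icc.mp (mem_RN.mp hMx).1).2
    have h2 : wq k n G a x ≤ n := by
      have e1 : wq k n G a x = Mxx k n G a - x - 1 := rfl
      omega
    have hfx : f x = Nat.log 2 (wq k n G a x) := rfl
    rw [hfx, Finset.mem_Icc]
    exact ⟨Nat.log_pos (by norm_num) (by omega), Nat.log_mono_right h2⟩
  calc s.card = ∑ p ∈ s.image f, (s.filter (fun x => f x = p)).card :=
        Finset.card_eq_sum_card_image f s
    _ ≤ ∑ _p ∈ s.image f, k := Finset.sum_le_sum hfib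
    _ = (s.image f).card * k := by rw [Finset.sum_const, smul_eq_mul]
    _ ≤ Nat.log 2 n * k := by
        apply Nat.mul_le_mul_right
        have hcc := Finset.card_le_card himgsub
        rwa [Nat.card_Icc, Nat.add_sub_cancel] at hcc
    _ = k * Nat.log 2 n := Nat.mul_comm _ _

end AuxST10E
section AuxST10F
open Finset

variable {k n : ℕ} {G : List (Finset ℕ)}

lemma total_bound_eq1 (hk1 : k = 1) (hS : HSimple G) (hGr : IsGraphH G)
    (hv : vset G ⊆ Finset.Icc 1 n)
    (hfree : ∀ M : List (Finset ℕ), IsMultiple k M → ¬ HContains G M) :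
    G.length ≤ n * (2 * k) := by
  classical
  rw [length_eq_sum hS hGr hv]
  have hb : ∀ a ∈ Finset.Icc 1 n, (RN n G a).card ≤ 2 * k := by
    intro a _
    have hsplit := Finset.card_filter_add_card_filter_not
      (s := RN n G a) (p := fun v => 2 * k ≤ (aft n G a v).card)
    have h1 : ((RN n G a).filter (fun v => 2 * k ≤ (aft n G a v).card)).card = 0 := by
      have := early_empty (n := n) hk1 hfree a
      rw [earlyS] at this
      rw [this]
      simp
    have h2 := late_bound (k := k) (n := n) (G := G) a
    omega
  calc ∑ a ∈ Finset.Icc 1 n, (RN n G a).card ≤ (Finset.Icc 1 n).card * (2 * k) := by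
        apply Finset.sum_le_card_nsmul _ _ _ hb
    _ = n * (2 * k) := by rw [Nat.card_Icc]; simp

lemma total_bound_ge2 (hk2 : 2 ≤ k) (hS : HSimple G) (hGr : IsGraphH G)
    (hv : vset G ⊆ Finset.Icc 1 n)
    (hfree : ∀ M : List (Finset ℕ), IsMultiple k M → ¬ HContains G M) :
    G.length ≤ n * (2 * k) + ((k - 1) * (n * (Nat.log 2 n + 1)) + n * (k * Nat.log 2 n)) := by
  classical
  have hk : 1 ≤ k := by omega
  rw [length_eq_sum hS hGr hv]
  have hsplit : ∀ a, (RN n G a).card = (earlyS k n G a).card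
      + ((RN n G a).filter (fun v => ¬ 2 * k ≤ (aft n G a v).card)).card := by
    intro a
    rw [earlyS]
    exact (Finset.card_filter_add_card_filter_not
      (p := fun v => 2 * k ≤ (aft n G a v).card)).symm
  have hlate : ∑ a ∈ Finset.Icc 1 n,
      ((RN n G a).filter (fun v => ¬ 2 * k ≤ (aft n G a v).card)).card ≤ n * (2 * k) := by
    calc ∑ a ∈ Finset.Icc 1 n, ((RN n G a).filter (fun v => ¬ 2 * k ≤ (aft n G a v).card)).card
        ≤ (Finset.Icc 1 n).card * (2 * k) :=
          Finset.sum_le_card_nsmul _ _ _ (fun a _ => late_bound a)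
      _ = n * (2 * k) := by rw [Nat.card_Icc]; simp
  set P := (Finset.Icc 1 n).sigma (fun a => earlyS k n G a) with hPdef
  have hPcard : ∑ a ∈ Finset.Icc 1 n, (earlyS k n G a).card = P.card :=
    (Finset.card_sigma _ _).symm
  have hPsplit : P.card = (P.filter (fun x => case1p k n G x.1 x.2)).card
      + (P.filter (fun x => ¬ case1p k n G x.1 x.2)).card :=
    (Finset.card_filter_add_card_filter_not _).symm
  have hP1 : (P.filter (fun x => case1p k n G x.1 x.2)).card
      ≤ (k - 1) * (n * (Nat.log 2 n + 1)) := case1_bound hk hfree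
  have hP2eq : P.filter (fun x => ¬ case1p k n G x.1 x.2)
      = (Finset.Icc 1 n).sigma
        (fun a => (earlyS k n G a).filter (fun v => ¬ case1p k n G a v)) := by
    ext x
    simp only [hPdef, Finset.mem_filter, Finset.mem_sigma]
    tauto
  have hP2 : (P.filter (fun x => ¬ case1p k n G x.1 x.2)).card ≤ n * (k * Nat.log 2 n) := by
    rw [hP2eq, Finset.card_sigma]
    calc ∑ a ∈ Finset.Icc 1 n, ((earlyS k n G a).filter (fun v => ¬ case1p k n G a v)).card
        ≤ (Finset.Icc 1 n).card * (k * Nat.log 2 n) :=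
          Finset.sum_le_card_nsmul _ _ _ (fun a _ => case2_bound hk2 a)
      _ = n * (k * Nat.log 2 n) := by rw [Nat.card_Icc]; simp
  calc ∑ a ∈ Finset.Icc 1 n, (RN n G a).card
      = (∑ a ∈ Finset.Icc 1 n, (earlyS k n G a).card)
        + ∑ a ∈ Finset.Icc 1 n,
          ((RN n G a).filter (fun v => ¬ 2 * k ≤ (aft n G a v).card)).card := by
        rw [← Finset.sum_add_distrib]
        exact Finset.sum_congr rfl (fun a _ => hsplit a)
    _ ≤ P.card + n * (2 * k) := by rw [hPcard]; omega
    _ ≤ ((k - 1) * (n * (Nat.log 2 n + 1)) + n * (k * Nat.log 2 n)) + n * (2 * k) := by omega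
    _ = n * (2 * k) + ((k - 1) * (n * (Nat.log 2 n + 1)) + n * (k * Nat.log 2 n)) := by omega

end AuxST10F
/-- Every simple ordered graph on `[n]` (`n ≥ 2`) containing no ordered copy of any
`k`-multiple of `G_1` has fewer than `(k²+k)n + k²·n·log₂ n` edges. -/
theorem stmt10 (k n : ℕ) (hk : 1 ≤ k) (hn : 2 ≤ n)
    (G : List (Finset ℕ)) (hS : HSimple G) (hGr : IsGraphH G)
    (hv : vset G ⊆ Finset.Icc 1 n)
    (hfree : ∀ M : List (Finset ℕ), IsMultiple k M → ¬ HContains G M) :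
    (G.length : ℝ) < ((k : ℝ) ^ 2 + k) * n + (k : ℝ) ^ 2 * n * Real.logb 2 n := by
  have hN0 : (0 : ℝ) < (n : ℝ) := by positivity
  have hN2 : (2 : ℝ) ≤ (n : ℝ) := by exact_mod_cast hn
  have hL1 : 1 ≤ Real.logb 2 (n : ℝ) := by
    have h := Real.logb_le_logb_of_le (b := 2) (by norm_num) (by norm_num) hN2
    rwa [Real.logb_self_eq_one (by norm_num)] at h
  have hK1 : (1 : ℝ) ≤ (k : ℝ) := by exact_mod_cast hk
  rcases eq_or_lt_of_le hk with hk1 | hk2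
  · -- k = 1
    have hb := total_bound_eq1 hk1.symm hS hGr hv hfree
    have hbR : (G.length : ℝ) ≤ (n : ℝ) * (2 * (k : ℝ)) := by exact_mod_cast hb
    have hkR : (k : ℝ) = 1 := by exact_mod_cast hk1.symm
    rw [hkR] at hbR ⊢
    nlinarith [mul_le_mul_of_nonneg_left hL1 (le_of_lt hN0)]
  · -- 2 ≤ k
    have hk2' : 2 ≤ k := hk2
    have hb := total_bound_ge2 hk2' hS hGr hv hfree
    set Λ : ℕ := Nat.log 2 n with hΛdef
    have hΛL : (Λ : ℝ) ≤ Real.logb 2 (n : ℝ) := by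
      have hpow : (2 : ℝ) ^ Λ ≤ (n : ℝ) := by
        exact_mod_cast Nat.pow_log_le_self 2 (x := n) (by omega)
      have h := Real.logb_le_logb_of_le (b := 2) (by norm_num) (by positivity) hpow
      rwa [Real.logb_pow, Real.logb_self_eq_one (by norm_num), mul_one] at h
    have hbR : (G.length : ℝ) ≤ (n : ℝ) * (2 * (k : ℝ))
        + (((k : ℝ) - 1) * ((n : ℝ) * ((Λ : ℝ) + 1)) + (n : ℝ) * ((k : ℝ) * (Λ : ℝ))) := by
      have hcast : ((k - 1 : ℕ) : ℝ) = (k : ℝ) - 1 := by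
        rw [Nat.cast_sub hk]; norm_num
      calc (G.length : ℝ) ≤ ((n * (2 * k) + ((k - 1) * (n * (Nat.log 2 n + 1))
            + n * (k * Nat.log 2 n)) : ℕ) : ℝ) := by exact_mod_cast hb
        _ = (n : ℝ) * (2 * (k : ℝ)) + (((k : ℝ) - 1) * ((n : ℝ) * ((Λ : ℝ) + 1))
            + (n : ℝ) * ((k : ℝ) * (Λ : ℝ))) := by
          push_cast [hcast]
          ring
    have hKR : (2 : ℝ) ≤ (k : ℝ) := by exact_mod_cast hk2'
    set K := (k : ℝ)
    set N := (n : ℝ)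
    set L := Real.logb 2 N
    set Lr := (Λ : ℝ)
    have hLr0 : 0 ≤ Lr := by positivity
    have step1 : N * (2 * K) + ((K - 1) * (N * (Lr + 1)) + N * (K * Lr))
        = (3 * K - 1) * N + (2 * K - 1) * (N * Lr) := by ring
    have step2 : (2 * K - 1) * (N * Lr) ≤ (2 * K - 1) * (N * L) := by
      apply mul_le_mul_of_nonneg_left _ (by nlinarith)
      exact mul_le_mul_of_nonneg_left hΛL (le_of_lt hN0)
    have hsq : 1 ≤ (K - 1) ^ 2 := by nlinarith
    have step3 : (3 * K - 1) * N + (2 * K - 1) * (N * L) < (K ^ 2 + K) * N + K ^ 2 * N * L := by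
      have hNL : N ≤ N * L := by nlinarith
      nlinarith [mul_le_mul_of_nonneg_right hsq (le_of_lt hN0),
        mul_le_mul_of_nonneg_right hsq (by positivity : (0:ℝ) ≤ N * L)]
    calc (G.length : ℝ) ≤ N * (2 * K) + ((K - 1) * (N * (Lr + 1)) + N * (K * Lr)) := hbR
      _ = (3 * K - 1) * N + (2 * K - 1) * (N * Lr) := step1
      _ ≤ (3 * K - 1) * N + (2 * K - 1) * (N * L) := by linarith [step2]
      _ < (K ^ 2 + K) * N + K ^ 2 * N * L := step3
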